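/- Let N > 2 and f_N(b) = Φ_N(b) / gcd(N, Φ_N(b)). If f_N(b) is composite, then f_N(b) is a Midy pseudoprime to base b. -/

import Mathlib

open Polynomial

lemma my_eval_cast (R : Type*) [CommRing R] (N b : ℕ) :
    (((Polynomial.cyclotomic N ℤ).eval (b : ℤ) : ℤ) : R) =
      (Polynomial.cyclotomic N R).eval (b : R) := by
  have h := Polynomial.eval_intCast_map (Int.castRingHom R) (Polynomial.cyclotomic N ℤ) (b : ℤ)
  rw [Polynomial.map_cyclotomic_int] at h
  simpa using h.symm

/-- If a prime `p` divides `N` (with `N > 2`, `b > 1`), then `p ^ 2 ∤ Φ_N(b)`. -/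
lemma my_sq_not_dvd (N b p : ℕ) (hN : 2 < N) (hb : 1 < b) (hp : p.Prime) (hpN : p ∣ N) :
    ¬ ((p : ℤ) ^ 2 ∣ (Polynomial.cyclotomic N ℤ).eval (b : ℤ)) := by
  intro h4
  haveI : Fact p.Prime := ⟨hp⟩
  set Φ : ℤ := (Polynomial.cyclotomic N ℤ).eval (b : ℤ) with hΦdef
  have hpΦ : (p : ℤ) ∣ Φ := (dvd_pow_self (p : ℤ) two_ne_zero).trans h4
  set m : ℕ := N / p with hmdef
  have hm : m * p = N := Nat.div_mul_cancel hpN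
  have hm1 : 1 ≤ m := by
    rcases Nat.eq_zero_or_pos m with h | h
    · rw [h] at hm; simp at hm; omega
    · exact h
  have hmN : m < N := Nat.div_lt_self (by omega) hp.one_lt
  have hmem : m ∈ N.properDivisors := Nat.mem_properDivisors.mpr ⟨⟨p, hm.symm⟩, hmN⟩
  have hpoly := Polynomial.X_pow_sub_one_mul_cyclotomic_dvd_X_pow_sub_one_of_dvd ℤ hmem
  have heval : ((b : ℤ) ^ m - 1) * Φ ∣ (b : ℤ) ^ N - 1 := by
    have := Polynomial.eval_dvd (x := (b : ℤ)) hpoly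
    simpa using this
  set c : ℤ := (b : ℤ) ^ m with hcdef
  set S : ℤ := ∑ i ∈ Finset.range p, c ^ i with hSdef
  have hgeom : S * (c - 1) = c ^ p - 1 := geom_sum_mul c p
  have hcp : c ^ p = (b : ℤ) ^ N := by rw [← pow_mul, hm]
  have hbz : (1 : ℤ) < (b : ℤ) := by exact_mod_cast hb
  have hc1 : (1 : ℤ) < c := by
    calc (1 : ℤ) < (b : ℤ) := hbz
    _ = (b : ℤ) ^ 1 := (pow_one _).symm
    _ ≤ (b : ℤ) ^ m := pow_le_pow_right₀ (by linarith) (by omega)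
  have hΦS : Φ ∣ S := by
    have h1 : (c - 1) * Φ ∣ (c - 1) * S := by
      have h2 : (c - 1) * S = (b : ℤ) ^ N - 1 := by rw [mul_comm, hgeom, hcp]
      rw [h2]; exact heval
    exact (mul_dvd_mul_iff_left (by linarith : c - 1 ≠ 0)).mp h1
  have hS4 : (p : ℤ) ^ 2 ∣ S := h4.trans hΦS
  -- b^N ≡ 1 mod p
  have hΦbN : Φ ∣ (b : ℤ) ^ N - 1 := by
    have := Polynomial.eval_dvd (x := (b : ℤ)) (Polynomial.cyclotomic.dvd_X_pow_sub_one N ℤ)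
    simpa using this
  have hpbN : (p : ℤ) ∣ (b : ℤ) ^ N - 1 := hpΦ.trans hΦbN
  have hbN1 : ((b : ℕ) : ZMod p) ^ N = 1 := by
    have h0 : (((b : ℤ) ^ N - 1 : ℤ) : ZMod p) = 0 :=
      (ZMod.intCast_zmod_eq_zero_iff_dvd _ _).mpr hpbN
    push_cast at h0
    linear_combination h0
  rcases hp.eq_two_or_odd' with h2 | hodd
  · -- p = 2
    subst h2
    have hbodd : ¬ (2 ∣ b) := by
      intro h2b
      have h0 : ((Φ : ℤ) : ZMod 2) = 0 :=
        (ZMod.intCast_zmod_eq_zero_iff_dvd _ _).mpr (by exact_mod_cast hpΦ)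
      rw [hΦdef, my_eval_cast] at h0
      have hb2 : ((b : ℕ) : ZMod 2) = 0 := (ZMod.natCast_eq_zero_iff _ _).mpr h2b
      rw [hb2, ← Polynomial.coeff_zero_eq_eval_zero,
        Polynomial.cyclotomic_coeff_zero _ (by omega)] at h0
      exact one_ne_zero h0
    have hb1 : ((b : ℕ) : ZMod 2) = 1 := by
      have hmod : b % 2 = 1 := Nat.odd_iff.mp (Nat.odd_iff.mpr (by omega))
      rw [← ZMod.natCast_mod, hmod, Nat.cast_one]
    have hNpow : ∃ k, 2 ≤ k ∧ N = 2 ^ k := by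
      by_cases hpp : IsPrimePow N
      · obtain ⟨q, k, hq, hk, hqk⟩ := hpp
        have hqnat : q.Prime := Nat.prime_iff.mpr hq
        have h2q : 2 ∣ q := (Nat.prime_two.dvd_of_dvd_pow (n := k) (by rw [hqk]; exact hpN))
        have hq2 : q = 2 := ((Nat.prime_dvd_prime_iff_eq Nat.prime_two hqnat).mp h2q).symm
        subst hq2
        refine ⟨k, ?_, hqk.symm⟩
        by_contra hkk
        have : 2 ^ k ≤ 2 ^ 1 := Nat.pow_le_pow_right (by omega) (by omega)
        omega
      · exfalso
        have h0 : ((Φ : ℤ) : ZMod 2) = 0 :=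
          (ZMod.intCast_zmod_eq_zero_iff_dvd _ _).mpr (by exact_mod_cast hpΦ)
        have hnp : ∀ {q : ℕ}, q.Prime → ∀ k : ℕ, q ^ k ≠ N := by
          intro q hq k he
          rcases Nat.eq_zero_or_pos k with rfl | hk
          · simp at he; omega
          · exact hpp ⟨q, k, Nat.prime_iff.mp hq, hk, he⟩
        rw [hΦdef, my_eval_cast, hb1,
          Polynomial.eval_one_cyclotomic_not_prime_pow hnp] at h0
        exact one_ne_zero h0
    obtain ⟨k, hk2, hNk⟩ := hNpow
    have hmeq : m = 2 ^ (k - 1) := by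
      have : 2 ^ (k - 1) * 2 = N := by
        rw [hNk, ← pow_succ]
        congr 1
        omega
      omega
    have hm2 : 2 ∣ m := by
      rw [hmeq]
      exact dvd_pow_self 2 (by omega)
    obtain ⟨m', hm'⟩ := hm2
    have hcsq : c = ((b : ℤ) ^ m') ^ 2 := by
      rw [hcdef, hm', ← pow_mul, mul_comm]
    have hxodd : Odd ((b : ℤ) ^ m') := by
      have hob : Odd b := Nat.odd_iff.mpr (by omega)
      exact ((Int.odd_coe_nat b).mpr hob).pow
    obtain ⟨t, ht⟩ := hxodd
    have h4c1 : (4 : ℤ) ∣ c - 1 := ⟨t * t + t, by rw [hcsq, ht]; ring⟩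
    have hS2 : S = 1 + c := by
      rw [hSdef]
      rw [Finset.sum_range_succ, Finset.sum_range_one]
      ring
    have h42 : (4 : ℤ) ∣ 2 := by
      have hS4' : (4 : ℤ) ∣ S := by
        have : ((2 : ℕ) : ℤ) ^ 2 = 4 := by norm_num
        rwa [this] at hS4
      have := dvd_sub hS4' h4c1
      rw [hS2] at this
      have h22 : (1 + c) - (c - 1) = 2 := by ring
      rwa [h22] at this
    norm_num at h42
  · -- p odd
    have hb0 : ((b : ℕ) : ZMod p) ≠ 0 := by
      intro h
      rw [h, zero_pow (by omega : N ≠ 0)] at hbN1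
      exact zero_ne_one hbN1
    set d : ℕ := orderOf ((b : ℕ) : ZMod p) with hddef
    have hdN : d ∣ N := orderOf_dvd_of_pow_eq_one hbN1
    have hdp : d ∣ p - 1 := ZMod.orderOf_dvd_card_sub_one hb0
    have hd0 : d ≠ 0 := by
      intro h
      rw [h] at hdp
      have := Nat.eq_zero_of_zero_dvd hdp
      have := hp.two_le
      omega
    have hpd : ¬ p ∣ d := by
      intro h
      have h1 : p ≤ d := Nat.le_of_dvd (Nat.pos_of_ne_zero hd0) h
      have h2 : d ≤ p - 1 := Nat.le_of_dvd (by have := hp.two_le; omega) hdp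
      omega
    have hdm : d ∣ m := by
      have hco : Nat.Coprime d p := Nat.coprime_comm.mp ((hp.coprime_iff_not_dvd).mpr hpd)
      exact hco.dvd_of_dvd_mul_right (by rwa [hm])
    have hcm1 : ((b : ℕ) : ZMod p) ^ m = 1 := orderOf_dvd_iff_pow_eq_one.mp hdm
    have hc1p : (p : ℤ) ∣ c - 1 := by
      rw [hcdef, ← ZMod.intCast_zmod_eq_zero_iff_dvd]
      push_cast
      rw [hcm1]
      ring
    obtain ⟨k, hk⟩ := hc1p
    have hceq : c = 1 + (p : ℤ) * k := by linarith [hk]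
    have hci : ∀ i : ℕ, (p : ℤ) ^ 2 ∣ c ^ i - (1 + (i : ℤ) * ((p : ℤ) * k)) := by
      intro i
      induction i with
      | zero => simp
      | succ n ih =>
        have heq : c ^ (n + 1) - (1 + ((n : ℤ) + 1) * ((p : ℤ) * k)) =
            c * (c ^ n - (1 + (n : ℤ) * ((p : ℤ) * k))) + (p : ℤ) ^ 2 * ((n : ℤ) * k * k) := by
          rw [hceq]; ring
        rw [Nat.cast_succ, heq]
        exact dvd_add (Dvd.dvd.mul_left ih c) ⟨(n : ℤ) * k * k, rfl⟩
    have hSsum : (p : ℤ) ^ 2 ∣ S - ∑ i ∈ Finset.range p, (1 + (i : ℤ) * ((p : ℤ) * k)) := by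
      rw [hSdef, ← Finset.sum_sub_distrib]
      exact Finset.dvd_sum fun i _ => hci i
    have hsum : ∑ i ∈ Finset.range p, (1 + (i : ℤ) * ((p : ℤ) * k)) =
        (p : ℤ) + (∑ i ∈ Finset.range p, (i : ℤ)) * ((p : ℤ) * k) := by
      rw [Finset.sum_add_distrib, Finset.sum_const, Finset.card_range, ← Finset.sum_mul]
      push_cast
      ring
    have hT : (p : ℕ) ∣ ∑ i ∈ Finset.range p, i := by
      have h2 : (∑ i ∈ Finset.range p, i) * 2 = p * (p - 1) := Finset.sum_range_id_mul_two p
      have hdvd2 : p ∣ (∑ i ∈ Finset.range p, i) * 2 := ⟨p - 1, h2⟩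
      have hco : Nat.Coprime p 2 := Nat.coprime_comm.mp
        ((Nat.prime_two.coprime_iff_not_dvd).mpr
          (by intro h; have := Nat.odd_iff.mp hodd; omega))
      exact (Nat.Coprime.dvd_of_dvd_mul_right hco hdvd2)
    have hTz : (p : ℤ) ∣ ∑ i ∈ Finset.range p, (i : ℤ) := by
      obtain ⟨t, ht⟩ := hT
      refine ⟨(t : ℤ), ?_⟩
      have : ((∑ i ∈ Finset.range p, i : ℕ) : ℤ) = ((p * t : ℕ) : ℤ) := by rw [ht]
      push_cast at this
      linarith
    have hsq : (p : ℤ) ^ 2 ∣ (∑ i ∈ Finset.range p, (i : ℤ)) * ((p : ℤ) * k) := by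
      obtain ⟨t, ht⟩ := hTz
      exact ⟨t * k, by rw [ht]; ring⟩
    have hfin : (p : ℤ) ^ 2 ∣ (p : ℤ) := by
      have h1 : (p : ℤ) ^ 2 ∣ S - (p : ℤ) - (∑ i ∈ Finset.range p, (i : ℤ)) * ((p : ℤ) * k) := by
        have := hSsum
        rw [hsum] at this
        have heq : S - ((p : ℤ) + (∑ i ∈ Finset.range p, (i : ℤ)) * ((p : ℤ) * k)) =
            S - (p : ℤ) - (∑ i ∈ Finset.range p, (i : ℤ)) * ((p : ℤ) * k) := by ring
        rwa [heq] at this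
      have h2 : (p : ℤ) ^ 2 ∣ S - (p : ℤ) := by
        have := dvd_add h1 hsq
        have heq : S - (p : ℤ) - (∑ i ∈ Finset.range p, (i : ℤ)) * ((p : ℤ) * k) +
            (∑ i ∈ Finset.range p, (i : ℤ)) * ((p : ℤ) * k) = S - (p : ℤ) := by ring
        rwa [heq] at this
      have := dvd_sub hS4 h2
      have heq : S - (S - (p : ℤ)) = (p : ℤ) := by ring
      rwa [heq] at this
    have hple : ((p : ℤ)) ^ 2 ≤ (p : ℤ) := Int.le_of_dvd (by exact_mod_cast hp.pos) hfin
    have hp2 : (2 : ℤ) ≤ (p : ℤ) := by exact_mod_cast hp.two_le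
    nlinarith


/-- The multiplicative order of `b` modulo `N`. -/
noncomputable def ord (b N : ℕ) : ℕ := orderOf (b : ZMod N)

/-- `N` is a Midy pseudoprime to base `b`: `N` is odd composite, coprime to `b` and to
`|b|_N`, and `|b|_N = |b|_p` for every prime `p ∣ N` (equivalent characterization). -/
def MidyPsp (b N : ℕ) : Prop :=
  Odd N ∧ 1 < N ∧ ¬ N.Prime ∧ Nat.Coprime N b ∧ Nat.Coprime N (ord b N) ∧
    ∀ p : ℕ, p.Prime → p ∣ N → ord b N = ord b p

/-- `f_N(b) = Φ_N(b) / gcd(N, Φ_N(b))`. -/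
noncomputable def fval (N b : ℕ) : ℕ :=
  ((Polynomial.cyclotomic N ℤ).eval (b : ℤ)).toNat /
    Nat.gcd N ((Polynomial.cyclotomic N ℤ).eval (b : ℤ)).toNat

/-- If `p ∤ N` is a prime dividing `Φ_N(b)`, then the order of `b` mod `p` is `N`. -/
lemma my_ord_eq (N b p : ℕ) (hN : 2 < N) (hp : p.Prime) (hpN : ¬ p ∣ N)
    (hdvd : (p : ℤ) ∣ (Polynomial.cyclotomic N ℤ).eval (b : ℤ)) :
    orderOf ((b : ℕ) : ZMod p) = N := by
  haveI : Fact p.Prime := ⟨hp⟩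
  haveI : NeZero (N : ZMod p) := ⟨by
    rw [Ne, ZMod.natCast_eq_zero_iff]
    exact hpN⟩
  have hroot : (Polynomial.cyclotomic N (ZMod p)).IsRoot ((b : ℕ) : ZMod p) := by
    have h0 : (((Polynomial.cyclotomic N ℤ).eval (b : ℤ) : ℤ) : ZMod p) = 0 :=
      (ZMod.intCast_zmod_eq_zero_iff_dvd _ _).mpr hdvd
    rw [my_eval_cast] at h0
    exact h0
  exact ((Polynomial.isRoot_cyclotomic_iff).mp hroot).eq_orderOf.symm

theorem stmt12 (N b : ℕ) (hN : 2 < N) (hb : 1 < b)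
    (hcomp : 1 < fval N b ∧ ¬ (fval N b).Prime) :
    MidyPsp b (fval N b) := by
  obtain ⟨hf1, hfnp⟩ := hcomp
  set Φz : ℤ := (Polynomial.cyclotomic N ℤ).eval (b : ℤ) with hΦzdef
  have hΦpos : 0 < Φz := Polynomial.cyclotomic_pos hN _
  set Φ : ℕ := Φz.toNat with hΦdef
  have hΦcast : (Φ : ℤ) = Φz := Int.toNat_of_nonneg hΦpos.le
  set g : ℕ := Nat.gcd N Φ with hgdef
  set f : ℕ := fval N b with hfdef
  have hfeq : f = Φ / g := rfl
  have hgdvd : g ∣ Φ := Nat.gcd_dvd_right N Φ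
  have hfg : f * g = Φ := by rw [hfeq]; exact Nat.div_mul_cancel hgdvd
  have hfdvdΦ : f ∣ Φ := ⟨g, hfg.symm⟩
  -- Φ divides b^N - 1
  have hΦbN : (Φ : ℤ) ∣ (b : ℤ) ^ N - 1 := by
    rw [hΦcast]
    have := Polynomial.eval_dvd (x := (b : ℤ)) (Polynomial.cyclotomic.dvd_X_pow_sub_one N ℤ)
    simpa using this
  have hfbN : (f : ℤ) ∣ (b : ℤ) ^ N - 1 := by
    refine dvd_trans ?_ hΦbN
    exact_mod_cast Int.natCast_dvd_natCast.mpr hfdvdΦ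
  -- p ∣ f → p ∤ N
  have hA : ∀ q : ℕ, q.Prime → q ∣ f → ¬ q ∣ N := by
    intro q hq hqf hqN
    apply my_sq_not_dvd N b q hN hb hq hqN
    have hqg : q ∣ g := Nat.dvd_gcd hqN (hqf.trans hfdvdΦ)
    have hq2 : q ^ 2 ∣ Φ := by
      obtain ⟨u, hu⟩ := hqf
      obtain ⟨v, hv⟩ := hqg
      exact ⟨u * v, by rw [← hfg, hu, hv]; ring⟩
    rw [← hΦzdef, ← hΦcast]
    exact_mod_cast Int.natCast_dvd_natCast.mpr hq2
  -- the order mod each prime divisor of f is N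
  have hordp : ∀ q : ℕ, q.Prime → q ∣ f → orderOf ((b : ℕ) : ZMod q) = N := by
    intro q hq hqf
    refine my_ord_eq N b q hN hq (hA q hq hqf) ?_
    rw [← hΦzdef, ← hΦcast]
    exact_mod_cast Int.natCast_dvd_natCast.mpr (hqf.trans hfdvdΦ)
  -- b^N = 1 mod f
  have hpowf : ((b : ℕ) : ZMod f) ^ N = 1 := by
    have h0 : (((b : ℤ) ^ N - 1 : ℤ) : ZMod f) = 0 :=
      (ZMod.intCast_zmod_eq_zero_iff_dvd _ _).mpr hfbN
    push_cast at h0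
    linear_combination h0
  have hordf_dvd : orderOf ((b : ℕ) : ZMod f) ∣ N := orderOf_dvd_of_pow_eq_one hpowf
  have hord_p_dvd : ∀ q : ℕ, q.Prime → (hqf : q ∣ f) →
      orderOf ((b : ℕ) : ZMod q) ∣ orderOf ((b : ℕ) : ZMod f) := by
    intro q hq hqf
    have h1 : ((b : ℕ) : ZMod q) ^ orderOf ((b : ℕ) : ZMod f) = 1 := by
      have h := congrArg (ZMod.castHom hqf (ZMod q)) (pow_orderOf_eq_one ((b : ℕ) : ZMod f))
      rw [map_pow, map_natCast, map_one] at h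
      exact h
    exact orderOf_dvd_of_pow_eq_one h1
  obtain ⟨q0, hq0, hq0f⟩ := Nat.exists_prime_and_dvd (by omega : f ≠ 1)
  have hordf : orderOf ((b : ℕ) : ZMod f) = N := by
    refine Nat.dvd_antisymm hordf_dvd ?_
    rw [← hordp q0 hq0 hq0f]
    exact hord_p_dvd q0 hq0 hq0f
  -- coprimality to b
  have hcfb : Nat.Coprime f b := by
    by_contra hnc
    obtain ⟨q, hq, hqf, hqb⟩ := Nat.Prime.not_coprime_iff_dvd.mp hnc
    have h1 : (q : ℤ) ∣ (b : ℤ) ^ N - 1 :=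
      dvd_trans (by exact_mod_cast Int.natCast_dvd_natCast.mpr hqf) hfbN
    have h2 : (q : ℤ) ∣ (b : ℤ) ^ N :=
      dvd_pow (by exact_mod_cast Int.natCast_dvd_natCast.mpr hqb) (by omega)
    have h3 : (q : ℤ) ∣ 1 := by
      have := dvd_sub h2 h1
      simpa using this
    have := Int.le_of_dvd one_pos h3
    have := hq.two_le
    omega
  -- each prime divisor exceeds N
  have hlarge : ∀ q : ℕ, q.Prime → q ∣ f → N ∣ q - 1 ∧ N < q := by
    intro q hq hqf
    haveI : Fact q.Prime := ⟨hq⟩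
    have hb0 : ((b : ℕ) : ZMod q) ≠ 0 := by
      intro h
      have hpow : ((b : ℕ) : ZMod q) ^ N = 1 := by
        rw [← hordp q hq hqf]; exact pow_orderOf_eq_one _
      rw [h, zero_pow (by omega : N ≠ 0)] at hpow
      exact zero_ne_one hpow
    have hd : N ∣ q - 1 := by
      rw [← hordp q hq hqf]
      exact ZMod.orderOf_dvd_card_sub_one hb0
    have hq2 := hq.two_le
    have hle : N ≤ q - 1 := Nat.le_of_dvd (by omega) hd
    exact ⟨hd, by omega⟩
  -- f is odd
  have hodd : Odd f := by
    rw [Nat.odd_iff]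
    by_contra h
    have h2f : 2 ∣ f := by omega
    have := (hlarge 2 Nat.prime_two h2f).2
    omega
  -- f coprime to N
  have hcfN : Nat.Coprime f N := by
    by_contra hnc
    obtain ⟨q, hq, hqf, hqN⟩ := Nat.Prime.not_coprime_iff_dvd.mp hnc
    exact hA q hq hqf hqN
  refine ⟨hodd, hf1, hfnp, hcfb, ?_, ?_⟩
  · show Nat.Coprime f (ord b f)
    unfold ord
    rw [hordf]
    exact hcfN
  · intro q hq hqf
    show ord b f = ord b q
    unfold ord
    rw [hordf, hordp q hq hqf]
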